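/- A disconnected graph G has a NAC-coloring if and only if G has at least two connected components each containing at least one edge, or some connected component of G has a NAC-coloring. -/

import Mathlib

open SimpleGraph

def IsNACColoring {V : Type*} (G : SimpleGraph V) (δ : Sym2 V → Bool) : Prop :=
  (∃ e ∈ G.edgeSet, δ e = true) ∧ (∃ e ∈ G.edgeSet, δ e = false) ∧
  ∀ ⦃u : V⦄ (w : G.Walk u u), w.IsCycle →
    ∀ b : Bool, (w.edges.countP fun e => δ e == b) ≠ 1

private lemma reachable_of_mem_support' {V : Type*} {G : SimpleGraph V} {u v x : V}
    (w : G.Walk u v) (hx : x ∈ w.support) : G.Reachable u x :=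
  have := Classical.decEq V
  ⟨w.takeUntil x hx⟩

/-- Lift a walk whose support lies in an adjacency-closed set to the induced subgraph. -/
private lemma exists_lift_walk {V : Type*} {G : SimpleGraph V} {S : Set V}
    (hS : ∀ ⦃x y : V⦄, x ∈ S → G.Adj x y → y ∈ S) :
    ∀ {a b : V} (w : G.Walk a b) (ha : a ∈ S) (hb : b ∈ S),
      ∃ w' : (G.induce S).Walk ⟨a, ha⟩ ⟨b, hb⟩,
        w'.map (SimpleGraph.Embedding.induce S).toHom = w := by
  intro a b w
  induction w with
  | nil => intro ha hb; exact ⟨SimpleGraph.Walk.nil, rfl⟩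
  | cons h p ih =>
    intro ha hb
    obtain ⟨p', hp'⟩ := ih (hS ha h) hb
    refine ⟨SimpleGraph.Walk.cons (by exact h) p', ?_⟩
    subst hp'; rfl

/-- All edges of a monochromatic walk count `0` or `length`, never `1` (for cycles). -/
private lemma countP_ne_one_of_const {V : Type*} {G : SimpleGraph V} {u : V}
    {w : G.Walk u u} (hw : w.IsCycle) {δ : Sym2 V → Bool} {c : Bool}
    (hconst : ∀ e ∈ w.edges, δ e = c) (b : Bool) :
    (w.edges.countP fun e => δ e == b) ≠ 1 := by
  by_cases hbc : c = b
  · have : (w.edges.countP fun e => δ e == b) = w.edges.length := by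
      apply List.countP_eq_length.mpr
      intro e he
      simp [hconst e he, hbc]
    rw [this, SimpleGraph.Walk.length_edges]
    have h3 := hw.three_le_length
    omega
  · have : (w.edges.countP fun e => δ e == b) = 0 := by
      apply List.countP_eq_zero.mpr
      intro e he
      simp only [hconst e he, beq_iff_eq]
      exact hbc
    omega


/-- Extend a NAC-coloring of the induced subgraph on a reachability-closed set
by `false` outside of it. -/
private lemma extend_NAC {V : Type*} (G : SimpleGraph V) (S : Set V)
    (hS : ∀ ⦃x y : V⦄, x ∈ S → G.Reachable x y → y ∈ S)
    (δ' : Sym2 S → Bool) (h : IsNACColoring (G.induce S) δ') :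
    ∃ δ : Sym2 V → Bool, IsNACColoring G δ := by
  classical
  obtain ⟨⟨e₁, he₁, hδ₁⟩, ⟨e₂, he₂, hδ₂⟩, hcyc⟩ := h
  have hSclosed : ∀ ⦃x y : V⦄, x ∈ S → G.Adj x y → y ∈ S :=
    fun x y hx hxy => hS hx hxy.reachable
  have hinj : Function.Injective (Sym2.map (Subtype.val : S → V)) :=
    Sym2.map.injective Subtype.val_injective
  set δ : Sym2 V → Bool := fun s =>
    if hh : ∃ t : Sym2 S, Sym2.map Subtype.val t = s then δ' hh.choose else false
    with hδdef
  have hδmap : ∀ t : Sym2 S, δ (Sym2.map Subtype.val t) = δ' t := by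
    intro t
    have hh : ∃ t' : Sym2 S, Sym2.map Subtype.val t' = Sym2.map Subtype.val t := ⟨t, rfl⟩
    rw [hδdef]
    simp only [dif_pos hh]
    congr 1
    exact hinj hh.choose_spec
  have hedge : ∀ t : Sym2 S, t ∈ (G.induce S).edgeSet →
      Sym2.map Subtype.val t ∈ G.edgeSet := by
    intro t ht
    induction t using Sym2.ind with | _ y z => exact ht
  refine ⟨δ, ?_, ?_, ?_⟩
  · exact ⟨Sym2.map Subtype.val e₁, hedge e₁ he₁, by rw [hδmap]; exact hδ₁⟩
  · exact ⟨Sym2.map Subtype.val e₂, hedge e₂ he₂, by rw [hδmap]; exact hδ₂⟩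
  · intro x w hw b
    by_cases hx : x ∈ S
    · obtain ⟨w', hw'⟩ := exists_lift_walk hSclosed w hx hx
      have hvalinj : Function.Injective
          ((SimpleGraph.Embedding.induce (G := G) S).toHom : S → V) :=
        Subtype.val_injective
      have hwc : w'.IsCycle := by
        rw [← SimpleGraph.Walk.map_isCycle_iff_of_injective hvalinj, hw']
        exact hw
      have hne := hcyc w' hwc b
      subst hw'
      erw [SimpleGraph.Walk.edges_map, List.countP_map]
      convert hne using 2
      funext t
      simp only [Function.comp]
      rw [show ((SimpleGraph.Embedding.induce (G := G) S).toHom : S → V) = Subtype.val from rfl]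
      rw [hδmap]
    · refine countP_ne_one_of_const hw (c := false) ?_ b
      intro e he
      induction e using Sym2.ind with | _ y z => ?_
      rw [hδdef]
      simp only
      rw [dif_neg]
      rintro ⟨t, ht⟩
      induction t using Sym2.ind with | _ a c => ?_
      rw [Sym2.map_pair_eq, Sym2.eq_iff] at ht
      have hyS : y ∈ S := by
        rcases ht with ⟨h1, _⟩ | ⟨_, h2⟩
        · rw [← h1]; exact a.2
        · rw [← h2]; exact c.2
      have hy : y ∈ w.support := w.fst_mem_support_of_mem_edges he
      have hxy : G.Reachable x y := reachable_of_mem_support' w hy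
      exact hx (hS hyS hxy.symm)

/-- a disconnected graph `G` has a NAC-coloring iff it has two
connected components each containing an edge, or some connected component of `G`
(as an induced subgraph) has a NAC-coloring. -/
theorem disconnected_hasNAC_iff {V : Type*} (G : SimpleGraph V)
    (hdisc : ¬ G.Preconnected) :
    (∃ δ : Sym2 V → Bool, IsNACColoring G δ) ↔
      ((∃ u v u' v' : V, G.Adj u v ∧ G.Adj u' v' ∧ ¬ G.Reachable u u') ∨
        (∃ (v : V) (δ' : Sym2 {w | G.Reachable v w} → Bool),
          IsNACColoring (G.induce {w | G.Reachable v w}) δ')) := by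
  classical
  constructor
  · rintro ⟨δ, ⟨e₁, he₁, hδ₁⟩, ⟨e₂, he₂, hδ₂⟩, hcyc⟩
    induction e₁ using Sym2.ind with | _ u v => ?_
    induction e₂ using Sym2.ind with | _ u' v' => ?_
    rw [SimpleGraph.mem_edgeSet] at he₁ he₂
    by_cases hreach : G.Reachable u u'
    · -- both edges in the component of u; restrict the coloring
      right
      set S : Set V := {w | G.Reachable u w} with hSdef
      have hSclosed : ∀ ⦃x y : V⦄, x ∈ S → G.Adj x y → y ∈ S :=
        fun x y hx hxy => hx.trans hxy.reachable
      refine ⟨u, fun s => δ (s.map Subtype.val), ?_, ?_, ?_⟩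
      · have hu : u ∈ S := Reachable.refl u
        have hv : v ∈ S := hSclosed hu he₁
        exact ⟨s(⟨u, hu⟩, ⟨v, hv⟩), by exact he₁, hδ₁⟩
      · have hu' : u' ∈ S := hreach
        have hv' : v' ∈ S := hSclosed hu' he₂
        exact ⟨s(⟨u', hu'⟩, ⟨v', hv'⟩), by exact he₂, hδ₂⟩
      · intro x w' hw' b
        have hinj : Function.Injective
            ((SimpleGraph.Embedding.induce (G := G) S).toHom : S → V) :=
          Subtype.val_injective
        have hcyc' :=
          hcyc (w'.map (SimpleGraph.Embedding.induce S).toHom) (hw'.map hinj) b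
        rwa [SimpleGraph.Walk.edges_map, List.countP_map] at hcyc'
    · left
      exact ⟨u, v, u', v', he₁, he₂, hreach⟩
  · rintro (⟨u, v, u', v', huv, hu'v', hreach⟩ | ⟨v, δ', ⟨e₁, he₁, hδ₁⟩, ⟨e₂, he₂, hδ₂⟩, hcyc⟩)
    · -- color edges by reachability from u
      refine ⟨fun s => decide (∃ x ∈ s, G.Reachable u x), ?_, ?_, ?_⟩
      · refine ⟨s(u, v), huv, ?_⟩
        simp only [decide_eq_true_eq]
        exact ⟨u, Sym2.mem_mk_left u v, Reachable.refl u⟩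
      · refine ⟨s(u', v'), hu'v', ?_⟩
        simp only [decide_eq_false_iff_not]
        rintro ⟨x, hx, hux⟩
        rw [Sym2.mem_iff] at hx
        rcases hx with rfl | rfl
        · exact hreach hux
        · exact hreach (hux.trans hu'v'.reachable.symm)
      · -- all edges of a cycle get the same color
        intro x w hw b
        refine countP_ne_one_of_const hw (c := decide (G.Reachable u x)) ?_ b
        intro e he
        induction e using Sym2.ind with | _ y z => ?_
        have hy : y ∈ w.support := w.fst_mem_support_of_mem_edges he
        have hxy : G.Reachable x y := reachable_of_mem_support' w hy
        have : (∃ a ∈ s(y, z), G.Reachable u a) ↔ G.Reachable u x := by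
          constructor
          · rintro ⟨a, ha, hua⟩
            rw [Sym2.mem_iff] at ha
            have hxa : G.Reachable x a := by
              have hz : z ∈ w.support := w.snd_mem_support_of_mem_edges he
              rcases ha with ha | ha
              · rw [ha]; exact hxy
              · rw [ha]; exact reachable_of_mem_support' w hz
            exact hua.trans hxa.symm
          · intro hux
            exact ⟨y, Sym2.mem_mk_left y z, hux.trans hxy⟩
        simp only [decide_eq_decide]
        exact this
    · exact extend_NAC G {w | G.Reachable v w}
        (fun x y hx hxy => hx.trans hxy) δ' ⟨⟨e₁, he₁, hδ₁⟩, ⟨e₂, he₂, hδ₂⟩, hcyc⟩
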